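/- arXiv:1906.04533 — 6 statements merged into one kernel-verified Lean document; each statement's English description precedes it below -/
import Mathlib

section
/- Let X, X', Y, Y' be finite subsets of the positive integers with X ∪ Y = X' ∪ Y' and X ∩ Y = X' ∩ Y', and let Z be a finite set of positive integers disjoint from X ∪ Y. Then Δ₁(X' ∪ Z)·Δ₁(Y' ∪ Z)·Δ₁(X)·Δ₁(Y) = Δ₁(X ∪ Z)·Δ₁(Y ∪ Z)·Δ₁(X')·Δ₁(Y'), where Δ₁(S) = ∏_{s,s' ∈ S, s < s'} (s' - s). -/
open Finset

/-- `Δ₁(S) = ∏_{s,s' ∈ S, s < s'} (s' - s)` for a finite set of naturals. -/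
def Delta1 (S : Finset ℕ) : ℕ :=
  ∏ s ∈ S, ∏ t ∈ S.filter (fun t => s < t), (t - s)

lemma Delta1_union_disjoint (A Z : Finset ℕ) (h : Disjoint A Z) :
    Delta1 (A ∪ Z) = Delta1 A * Delta1 Z *
      ∏ a ∈ A, ∏ z ∈ Z, (if a < z then z - a else a - z) := by
  unfold Delta1
  have hf : ∀ s : ℕ, (A ∪ Z).filter (fun t => s < t)
      = A.filter (fun t => s < t) ∪ Z.filter (fun t => s < t) := by
    intro s; rw [filter_union]
  have hd : ∀ s : ℕ, Disjoint (A.filter (fun t => s < t)) (Z.filter (fun t => s < t)) :=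
    fun s => disjoint_filter_filter h
  calc ∏ s ∈ A ∪ Z, ∏ t ∈ (A ∪ Z).filter (fun t => s < t), (t - s)
      = (∏ s ∈ A, (∏ t ∈ A.filter (fun t => s < t), (t - s)) *
          ∏ t ∈ Z.filter (fun t => s < t), (t - s)) *
        ∏ s ∈ Z, (∏ t ∈ A.filter (fun t => s < t), (t - s)) *
          ∏ t ∈ Z.filter (fun t => s < t), (t - s) := by
        rw [prod_union h]
        congr 1 <;> exact Finset.prod_congr rfl (fun s _ => by rw [hf s, prod_union (hd s)])
    _ = (∏ s ∈ A, ∏ t ∈ A.filter (fun t => s < t), (t - s)) *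
        (∏ s ∈ Z, ∏ t ∈ Z.filter (fun t => s < t), (t - s)) *
        ((∏ s ∈ A, ∏ t ∈ Z.filter (fun t => s < t), (t - s)) *
         (∏ s ∈ Z, ∏ t ∈ A.filter (fun t => s < t), (t - s))) := by
        rw [prod_mul_distrib, prod_mul_distrib]; ring
    _ = _ := by
        congr 1
        have h2 : (∏ s ∈ Z, ∏ t ∈ A.filter (fun t => s < t), (t - s))
            = ∏ a ∈ A, ∏ z ∈ Z.filter (fun z => z < a), (a - z) := by
          simp only [prod_filter]
          exact Finset.prod_comm
        rw [h2, ← prod_mul_distrib]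
        refine Finset.prod_congr rfl (fun a ha => ?_)
        rw [Finset.prod_ite]
        congr 1
        refine Finset.prod_congr ?_ (fun z _ => rfl)
        refine filter_congr (fun z hz => ?_)
        have hne : z ≠ a := fun e => (disjoint_left.mp h ha (e ▸ hz)).elim
        simp only [not_lt]
        omega

/-- Shuffling invariance of the product `Δ₁(X∪Z)·Δ₁(Y∪Z)` (cross-multiplied form of
`Δ₁(X'∪Z)Δ₁(Y'∪Z)/Δ₁(X∪Z)Δ₁(Y∪Z) = Δ₁(X')Δ₁(Y')/Δ₁(X)Δ₁(Y)`). -/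
theorem delta1_shuffle (X X' Y Y' Z : Finset ℕ)
    (hpos : ∀ s ∈ X ∪ Y ∪ Z, 0 < s)
    (hU : X ∪ Y = X' ∪ Y') (hI : X ∩ Y = X' ∩ Y')
    (hZ : Disjoint Z (X ∪ Y)) :
    Delta1 (X' ∪ Z) * Delta1 (Y' ∪ Z) * (Delta1 X * Delta1 Y)
      = Delta1 (X ∪ Z) * Delta1 (Y ∪ Z) * (Delta1 X' * Delta1 Y') := by
  have hZ' : Disjoint (X ∪ Y) Z := hZ.symm
  have hX : Disjoint X Z := hZ'.mono_left subset_union_left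
  have hY : Disjoint Y Z := hZ'.mono_left subset_union_right
  have hZ'' : Disjoint (X' ∪ Y') Z := hU ▸ hZ'
  have hX' : Disjoint X' Z := hZ''.mono_left subset_union_left
  have hY' : Disjoint Y' Z := hZ''.mono_left subset_union_right
  have key : (∏ a ∈ X', ∏ z ∈ Z, (if a < z then z - a else a - z)) *
      (∏ a ∈ Y', ∏ z ∈ Z, (if a < z then z - a else a - z))
      = (∏ a ∈ X, ∏ z ∈ Z, (if a < z then z - a else a - z)) *
        (∏ a ∈ Y, ∏ z ∈ Z, (if a < z then z - a else a - z)) := by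
    calc _ = (∏ a ∈ X' ∪ Y', ∏ z ∈ Z, (if a < z then z - a else a - z)) *
          (∏ a ∈ X' ∩ Y', ∏ z ∈ Z, (if a < z then z - a else a - z)) :=
            Finset.prod_union_inter.symm
      _ = (∏ a ∈ X ∪ Y, ∏ z ∈ Z, (if a < z then z - a else a - z)) *
          (∏ a ∈ X ∩ Y, ∏ z ∈ Z, (if a < z then z - a else a - z)) := by rw [hU, hI]
      _ = _ := Finset.prod_union_inter
  rw [Delta1_union_disjoint X Z hX, Delta1_union_disjoint Y Z hY,
      Delta1_union_disjoint X' Z hX', Delta1_union_disjoint Y' Z hY']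
  generalize (∏ a ∈ X, ∏ z ∈ Z, (if a < z then z - a else a - z)) = pX at key ⊢
  generalize (∏ a ∈ Y, ∏ z ∈ Z, (if a < z then z - a else a - z)) = pY at key ⊢
  generalize (∏ a ∈ X', ∏ z ∈ Z, (if a < z then z - a else a - z)) = pX' at key ⊢
  generalize (∏ a ∈ Y', ∏ z ∈ Z, (if a < z then z - a else a - z)) = pY' at key ⊢
  calc Delta1 X' * Delta1 Z * pX' * (Delta1 Y' * Delta1 Z * pY') * (Delta1 X * Delta1 Y)
      = (pX' * pY') * (Delta1 X' * Delta1 Z * (Delta1 Y' * Delta1 Z) * (Delta1 X * Delta1 Y)) := by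
        ring
    _ = (pX * pY) * (Delta1 X' * Delta1 Z * (Delta1 Y' * Delta1 Z) * (Delta1 X * Delta1 Y)) := by
        rw [key]
    _ = _ := by ring
end

section
/- Let k be a positive integer, and let X, X' ⊆ [k] be such that X ∪ X_{(k)} = X' ∪ X'_{(k)} and X ∩ X_{(k)} = X' ∩ X'_{(k)}. Let Z ⊆ [k] be disjoint from X ∪ X_{(k)} and satisfy Z = Z_{(k)}. Then Δ₂(X, Z) = Δ₂(X', Z), where Δ₂(S,T) = ∏_{s∈S,t∈T}|t−s|. -/
open Finset

/-- `Δ₂(S,T) = ∏_{s ∈ S, t ∈ T} |t - s|`. -/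
def Delta2 (S T : Finset ℕ) : ℕ :=
  ∏ s ∈ S, ∏ t ∈ T, (max s t - min s t)

/-- The k-reflection `S_{(k)} = {k+1-s : s ∈ S}` of `S ⊆ [k]`. -/
def kReflect (k : ℕ) (S : Finset ℕ) : Finset ℕ :=
  S.image (fun s => k + 1 - s)

/-- If `(X', X'_{(k)})` is a shuffling of `(X, X_{(k)})` and `Z ⊆ [k]` is
k-symmetric and disjoint from `X ∪ X_{(k)}`, then `Δ₂(X,Z) = Δ₂(X',Z)`. -/
theorem delta2_symmetric_shuffle (k : ℕ) (hk : 0 < k) (X X' Z : Finset ℕ)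
    (hX : X ⊆ Finset.Icc 1 k) (hX' : X' ⊆ Finset.Icc 1 k) (hZk : Z ⊆ Finset.Icc 1 k)
    (hU : X ∪ kReflect k X = X' ∪ kReflect k X')
    (hI : X ∩ kReflect k X = X' ∩ kReflect k X')
    (hZ : Disjoint Z (X ∪ kReflect k X))
    (hZsym : kReflect k Z = Z) :
    Delta2 X Z = Delta2 X' Z := by
  set f : ℕ → ℕ := fun x => ∏ z ∈ Z, (max x z - min x z) with hf
  have hfrefl : ∀ x ∈ Finset.Icc 1 k, f (k + 1 - x) = f x := by
    intro x hx
    simp only [Finset.mem_Icc] at hx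
    conv_lhs => rw [hf]
    simp only
    rw [← hZsym, kReflect,
      Finset.prod_image (fun a ha b hb h => by
        have ha' := hZk ha; have hb' := hZk hb
        simp only [Finset.mem_Icc] at ha' hb'
        omega)]
    refine Finset.prod_congr rfl ?_
    intro z hz
    have hz' := hZk hz
    simp only [Finset.mem_Icc] at hz'
    omega
  have key : ∀ Y : Finset ℕ, Y ⊆ Finset.Icc 1 k →
      ∏ x ∈ kReflect k Y, f x = ∏ x ∈ Y, f x := by
    intro Y hY
    rw [kReflect, Finset.prod_image (fun a ha b hb h => by
      have ha' := hY ha; have hb' := hY hb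
      simp only [Finset.mem_Icc] at ha' hb'
      omega)]
    exact Finset.prod_congr rfl fun x hx => hfrefl x (hY hx)
  have h1 := Finset.prod_union_inter (s₁ := X) (s₂ := kReflect k X) (f := f)
  have h2 := Finset.prod_union_inter (s₁ := X') (s₂ := kReflect k X') (f := f)
  rw [key X hX] at h1
  rw [key X' hX'] at h2
  rw [hU, hI, h2] at h1
  have : (∏ x ∈ X', f x) = ∏ x ∈ X, f x := Nat.mul_self_inj.mp h1
  have hD : Delta2 X Z = ∏ x ∈ X, f x := rfl
  have hD' : Delta2 X' Z = ∏ x ∈ X', f x := rfl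
  rw [hD, hD', this]
end

section
/- Let k be a positive integer, X, X' ⊆ [k] with X ∪ X_{(k)} = X' ∪ X'_{(k)} and X ∩ X_{(k)} = X' ∩ X'_{(k)}, and let Z ⊆ [k] be disjoint from X ∪ X_{(k)} with Z = Z_{(k)}. Then Δ₁(X' ∪ Z)·Δ₁(X) = Δ₁(X ∪ Z)·Δ₁(X'), where Δ₁(S) = ∏_{s<s' in S}(s'−s). -/
open Finset

/-- symmetric distance-like gadget -/
def gd (a b : ℕ) : ℕ := (if a < b then b - a else 1) * (if b < a then a - b else 1)

lemma gd_reflect {k a b : ℕ} (ha1 : 1 ≤ a) (ha2 : a ≤ k) (hb1 : 1 ≤ b) (hb2 : b ≤ k) :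
    gd (k + 1 - a) (k + 1 - b) = gd a b := by
  unfold gd
  have h1 : k + 1 - a < k + 1 - b ↔ b < a := by omega
  have h2 : k + 1 - b < k + 1 - a ↔ a < b := by omega
  rcases lt_trichotomy a b with h | h | h
  · rw [if_neg (by omega), if_pos (h2.mpr h), if_pos h, if_neg (by omega)]
    simp; omega
  · subst h; simp
  · rw [if_pos (h1.mpr h), if_neg (by omega), if_neg (by omega), if_pos h]
    simp; omega

lemma Delta1_union {A B : Finset ℕ} (h : Disjoint A B) :
    Delta1 (A ∪ B) = Delta1 A * Delta1 B * ∏ a ∈ A, ∏ b ∈ B, gd a b := by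
  unfold Delta1
  rw [Finset.prod_union h]
  have hfil : ∀ s : ℕ, (A ∪ B).filter (fun t => s < t)
      = A.filter (fun t => s < t) ∪ B.filter (fun t => s < t) := by
    intro s; rw [Finset.filter_union]
  have hdisj : ∀ s : ℕ, Disjoint (A.filter (fun t => s < t)) (B.filter (fun t => s < t)) :=
    fun s => Finset.disjoint_filter_filter h
  have e1 : ∀ s : ℕ, ∏ t ∈ (A ∪ B).filter (fun t => s < t), (t - s)
      = (∏ t ∈ A.filter (fun t => s < t), (t - s)) * ∏ t ∈ B.filter (fun t => s < t), (t - s) := by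
    intro s; rw [hfil s, Finset.prod_union (hdisj s)]
  simp only [e1]
  rw [Finset.prod_mul_distrib, Finset.prod_mul_distrib]
  have cross1 : (∏ s ∈ A, ∏ t ∈ B.filter (fun t => s < t), (t - s))
      = ∏ a ∈ A, ∏ b ∈ B, (if a < b then b - a else 1) := by
    refine Finset.prod_congr rfl fun a _ => ?_
    rw [Finset.prod_filter]
  have cross2 : (∏ s ∈ B, ∏ t ∈ A.filter (fun t => s < t), (t - s))
      = ∏ a ∈ A, ∏ b ∈ B, (if b < a then a - b else 1) := by
    rw [Finset.prod_comm]
    refine Finset.prod_congr rfl fun a _ => ?_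
    rw [Finset.prod_filter]
  rw [cross1, cross2]
  have : (∏ a ∈ A, ∏ b ∈ B, gd a b)
      = (∏ a ∈ A, ∏ b ∈ B, (if a < b then b - a else 1))
        * ∏ a ∈ A, ∏ b ∈ B, (if b < a then a - b else 1) := by
    rw [← Finset.prod_mul_distrib]
    refine Finset.prod_congr rfl fun a _ => ?_
    rw [← Finset.prod_mul_distrib]
    exact Finset.prod_congr rfl fun b _ => rfl
  rw [this]; ring

lemma reflect_injOn (k : ℕ) (S : Finset ℕ) (hS : S ⊆ Finset.Icc 1 k) :
    Set.InjOn (fun s => k + 1 - s) ↑S := by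
  intro a ha b hb hab
  have ha' := hS ha; have hb' := hS hb
  simp only [Finset.mem_Icc] at ha' hb'
  simp only at hab; omega

/-- If `(X', X'_{(k)})` is a shuffling of `(X, X_{(k)})` and `Z ⊆ [k]` is
k-symmetric and disjoint from `X ∪ X_{(k)}`, then
`Δ₁(X'∪Z)·Δ₁(X) = Δ₁(X∪Z)·Δ₁(X')`. -/
theorem delta1_symmetric_shuffle (k : ℕ) (hk : 0 < k) (X X' Z : Finset ℕ)
    (hX : X ⊆ Finset.Icc 1 k) (hX' : X' ⊆ Finset.Icc 1 k) (hZk : Z ⊆ Finset.Icc 1 k)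
    (hU : X ∪ kReflect k X = X' ∪ kReflect k X')
    (hI : X ∩ kReflect k X = X' ∩ kReflect k X')
    (hZ : Disjoint Z (X ∪ kReflect k X))
    (hZsym : kReflect k Z = Z) :
    Delta1 (X' ∪ Z) * Delta1 X = Delta1 (X ∪ Z) * Delta1 X' := by
  set f : ℕ → ℕ := fun x => ∏ z ∈ Z, gd x z with hf
  -- reflection invariance of f on [1,k]
  have hfrefl : ∀ x ∈ Finset.Icc 1 k, f (k + 1 - x) = f x := by
    intro x hx
    simp only [Finset.mem_Icc] at hx
    have : f (k + 1 - x) = ∏ z ∈ Z, gd (k + 1 - x) (k + 1 - z) := by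
      show ∏ z ∈ Z, gd (k + 1 - x) z = _
      conv_lhs => rw [← hZsym]
      rw [kReflect, Finset.prod_image (reflect_injOn k Z hZk)]
    rw [this]
    refine Finset.prod_congr rfl fun z hz => ?_
    have hz' := hZk hz; simp only [Finset.mem_Icc] at hz'
    exact gd_reflect hx.1 hx.2 hz'.1 hz'.2
  -- product of f over a reflection equals product over the set
  have hrefl_prod : ∀ S : Finset ℕ, S ⊆ Finset.Icc 1 k →
      ∏ x ∈ kReflect k S, f x = ∏ x ∈ S, f x := by
    intro S hS
    rw [kReflect, Finset.prod_image (reflect_injOn k S hS)]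
    exact Finset.prod_congr rfl fun x hx => hfrefl x (hS hx)
  -- the key invariance
  have hkey : ∏ x ∈ X, f x = ∏ x ∈ X', f x := by
    have h1 : (∏ x ∈ X ∪ kReflect k X, f x) * ∏ x ∈ X ∩ kReflect k X, f x
        = (∏ x ∈ X, f x) * ∏ x ∈ kReflect k X, f x := Finset.prod_union_inter
    have h2 : (∏ x ∈ X' ∪ kReflect k X', f x) * ∏ x ∈ X' ∩ kReflect k X', f x
        = (∏ x ∈ X', f x) * ∏ x ∈ kReflect k X', f x := Finset.prod_union_inter
    rw [hU, hI, h2, hrefl_prod X hX, hrefl_prod X' hX'] at h1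
    exact Nat.mul_self_inj.mp h1.symm
  -- disjointness
  have hdXZ : Disjoint X Z := by
    have := Finset.disjoint_union_left.mp hZ.symm
    exact this.1
  have hdX'Z : Disjoint X' Z := by
    have hsub : X' ⊆ X ∪ kReflect k X := by
      rw [hU]; exact Finset.subset_union_left
    exact (hZ.symm.mono_left hsub)
  rw [Delta1_union hdXZ, Delta1_union hdX'Z]
  have hc : (∏ a ∈ X', ∏ b ∈ Z, gd a b) = ∏ a ∈ X, ∏ b ∈ Z, gd a b := hkey.symm
  rw [hc]; ring
end

section
/- Let k be a positive integer and X, X', Z ⊆ [k] with (X', X'_{(k)}) a shuffling of (X, X_{(k)}), Z disjoint from X ∪ X_{(k)}, and Z = Z_{(k)}. Then Δ₂(X, Z)·Δ₂(X_{(k)}, Z) = Δ₂(X', Z)·Δ₂(X'_{(k)}, Z), and moreover Δ₂(X_{(k)}, Z_{(k)}) = Δ₂(X, Z). -/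
open Finset

/-- For a k-symmetric shuffling:
`Δ₂(X,Z)·Δ₂(X_{(k)},Z) = Δ₂(X',Z)·Δ₂(X'_{(k)},Z)` and
`Δ₂(X_{(k)},Z_{(k)}) = Δ₂(X,Z)`. -/
theorem delta2_symmetric_shuffle_pair (k : ℕ) (hk : 0 < k) (X X' Z : Finset ℕ)
    (hX : X ⊆ Finset.Icc 1 k) (hX' : X' ⊆ Finset.Icc 1 k) (hZk : Z ⊆ Finset.Icc 1 k)
    (hU : X ∪ kReflect k X = X' ∪ kReflect k X')
    (hI : X ∩ kReflect k X = X' ∩ kReflect k X')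
    (hZ : Disjoint Z (X ∪ kReflect k X))
    (hZsym : Z = kReflect k Z) :
    Delta2 X Z * Delta2 (kReflect k X) Z
        = Delta2 X' Z * Delta2 (kReflect k X') Z
      ∧ Delta2 (kReflect k X) (kReflect k Z) = Delta2 X Z := by
  constructor
  · have h : ∀ Y : Finset ℕ, Delta2 Y Z * Delta2 (kReflect k Y) Z
        = (∏ s ∈ Y ∪ kReflect k Y, ∏ t ∈ Z, (max s t - min s t)) *
          ∏ s ∈ Y ∩ kReflect k Y, ∏ t ∈ Z, (max s t - min s t) := by
      intro Y
      rw [Delta2, Delta2, Finset.prod_union_inter]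
    rw [h X, h X', hU, hI]
  · unfold Delta2 kReflect
    rw [Finset.prod_image (fun x hx y hy h => by
        have hx' := hX hx; have hy' := hX hy
        simp only [Finset.mem_Icc] at hx' hy'; omega)]
    apply Finset.prod_congr rfl
    intro s hs
    rw [Finset.prod_image (fun x hx y hy h => by
        have hx' := hZk hx; have hy' := hZk hy
        simp only [Finset.mem_Icc] at hx' hy'; omega)]
    apply Finset.prod_congr rfl
    intro t ht
    have hs' := hX hs; have ht' := hZk ht
    simp only [Finset.mem_Icc] at hs' ht'
    simp only [Nat.max_def, Nat.min_def]
    split <;> split <;> omega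
end

section
/- Let a+b = a'+b', b+c = b'+c', and X, Y ⊆ [a+b], X', Y' ⊆ [a'+b'] with X ∪ Y = X' ∪ Y', X ∩ Y = X' ∩ Y', and b−|X| = b'−|X'| ≥ 0. Then the ratio of the sums ( Σ_Z Δ₁(X'∪Z)·Δ₁(Y'∪Z) ) / ( Σ_Z Δ₁(X∪Z)·Δ₁(Y∪Z) ), where Z ranges over all (b−|X|)-element subsets of [a+b]∖(X∪Y), equals (Δ₁(X')·Δ₁(Y'))/(Δ₁(X)·Δ₁(Y)), assuming there is at least one such Z. -/
open Finset

/-- `dd s z = |s - z|`. -/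
def dd (s z : ℕ) : ℕ := (z - s) + (s - z)

/-- Cross product of distances. -/
def Cross (S Z : Finset ℕ) : ℕ := ∏ s ∈ S, ∏ z ∈ Z, dd s z

lemma delta1_union (S Z : Finset ℕ) (h : Disjoint S Z) :
    Delta1 (S ∪ Z) = Delta1 S * Delta1 Z * Cross S Z := by
  unfold Delta1 Cross
  rw [prod_union h]
  have hfil : ∀ s : ℕ, (S ∪ Z).filter (fun t => s < t)
      = S.filter (fun t => s < t) ∪ Z.filter (fun t => s < t) := by
    intro s; rw [filter_union]
  have hdisj : ∀ s : ℕ, Disjoint (S.filter (fun t => s < t)) (Z.filter (fun t => s < t)) :=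
    fun s => (h.mono (filter_subset _ _) (filter_subset _ _))
  have h1 : ∀ s ∈ S, ∏ t ∈ (S ∪ Z).filter (fun t => s < t), (t - s)
      = (∏ t ∈ S.filter (fun t => s < t), (t - s)) *
        ∏ t ∈ Z.filter (fun t => s < t), (t - s) := by
    intro s _; rw [hfil s, prod_union (hdisj s)]
  have h2 : ∀ s ∈ Z, ∏ t ∈ (S ∪ Z).filter (fun t => s < t), (t - s)
      = (∏ t ∈ S.filter (fun t => s < t), (t - s)) *
        ∏ t ∈ Z.filter (fun t => s < t), (t - s) := by
    intro s _; rw [hfil s, prod_union (hdisj s)]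
  rw [prod_congr rfl h1, prod_congr rfl h2, prod_mul_distrib, prod_mul_distrib]
  -- remaining: cross terms
  have hswap : (∏ z ∈ Z, ∏ s ∈ S.filter (fun t => z < t), (s - z))
      = ∏ s ∈ S, ∏ z ∈ Z.filter (fun z => z < s), (s - z) := by
    rw [Finset.prod_comm' (t := fun z => S.filter (fun t => z < t))
      (s' := fun s => Z.filter (fun z => z < s))]
    intro z s
    simp only [mem_filter]
    tauto
  rw [hswap]
  have hcross : (∏ s ∈ S, ∏ z ∈ Z.filter (fun t => s < t), (z - s)) *
      ∏ s ∈ S, ∏ z ∈ Z.filter (fun z => z < s), (s - z)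
      = ∏ s ∈ S, ∏ z ∈ Z, dd s z := by
    rw [← prod_mul_distrib]
    refine prod_congr rfl fun s hs => ?_
    have hsz : s ∉ Z := disjoint_left.mp h hs
    rw [← Finset.prod_filter_mul_prod_filter_not Z (fun z => s < z) (dd s)]
    congr 1
    · refine prod_congr rfl fun z hz => ?_
      simp only [mem_filter] at hz
      unfold dd; omega
    · have : Z.filter (fun z => ¬ s < z) = Z.filter (fun z => z < s) := by
        refine filter_congr fun z hz => ?_
        have : z ≠ s := fun e => hsz (e ▸ hz)
        omega
      rw [this]
      refine prod_congr rfl fun z hz => ?_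
      simp only [mem_filter] at hz
      unfold dd; omega
  rw [← hcross]
  ring

/-- Shuffling invariance of the ratio of sums
`(Σ_Z Δ₁(X'∪Z)Δ₁(Y'∪Z)) / (Σ_Z Δ₁(X∪Z)Δ₁(Y∪Z)) = Δ₁(X')Δ₁(Y')/(Δ₁(X)Δ₁(Y))`,
`Z` ranging over the `(b-|X|)`-element subsets of `[a+b] ∖ (X∪Y)`;
stated in cross-multiplied form. -/
theorem sum_delta1_shuffle (a b c a' b' c' : ℕ) (X Y X' Y' : Finset ℕ)
    (hab : a + b = a' + b') (hbc : b + c = b' + c')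
    (hXs : X ⊆ Finset.Icc 1 (a + b)) (hYs : Y ⊆ Finset.Icc 1 (a + b))
    (hXs' : X' ⊆ Finset.Icc 1 (a' + b')) (hYs' : Y' ⊆ Finset.Icc 1 (a' + b'))
    (hU : X ∪ Y = X' ∪ Y') (hI : X ∩ Y = X' ∩ Y')
    (hXb : X.card ≤ b) (hXb' : X'.card ≤ b')
    (hcard : b - X.card = b' - X'.card)
    (hne : ((Finset.Icc 1 (a + b) \ (X ∪ Y)).powersetCard (b - X.card)).Nonempty) :
    (∑ Z ∈ (Finset.Icc 1 (a + b) \ (X ∪ Y)).powersetCard (b - X.card),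
        Delta1 (X' ∪ Z) * Delta1 (Y' ∪ Z)) * (Delta1 X * Delta1 Y)
      = (∑ Z ∈ (Finset.Icc 1 (a + b) \ (X ∪ Y)).powersetCard (b - X.card),
          Delta1 (X ∪ Z) * Delta1 (Y ∪ Z)) * (Delta1 X' * Delta1 Y') := by
  rw [sum_mul, sum_mul]
  refine sum_congr rfl fun Z hZ => ?_
  have hZsub : Z ⊆ Finset.Icc 1 (a + b) \ (X ∪ Y) := (mem_powersetCard.mp hZ).1
  have hdU : Disjoint (X ∪ Y) Z :=
    disjoint_right.mpr fun z hz hzU => (mem_sdiff.mp (hZsub hz)).2 hzU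
  have hdX : Disjoint X Z := hdU.mono_left subset_union_left
  have hdY : Disjoint Y Z := hdU.mono_left subset_union_right
  have hdU' : Disjoint (X' ∪ Y') Z := hU ▸ hdU
  have hdX' : Disjoint X' Z := hdU'.mono_left subset_union_left
  have hdY' : Disjoint Y' Z := hdU'.mono_left subset_union_right
  rw [delta1_union X Z hdX, delta1_union Y Z hdY, delta1_union X' Z hdX',
    delta1_union Y' Z hdY']
  have hc : Cross X Z * Cross Y Z = Cross X' Z * Cross Y' Z := by
    unfold Cross
    rw [← Finset.prod_union_inter]
    conv_rhs => rw [← Finset.prod_union_inter]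
    rw [hU, hI]
  calc (Delta1 X' * Delta1 Z * Cross X' Z) * (Delta1 Y' * Delta1 Z * Cross Y' Z) *
        (Delta1 X * Delta1 Y)
      = (Cross X' Z * Cross Y' Z) *
        (Delta1 X * Delta1 Y * Delta1 X' * Delta1 Y' * (Delta1 Z * Delta1 Z)) := by ring
    _ = (Cross X Z * Cross Y Z) *
        (Delta1 X * Delta1 Y * Delta1 X' * Delta1 Y' * (Delta1 Z * Delta1 Z)) := by rw [hc]
    _ = (Delta1 X * Delta1 Z * Cross X Z) * (Delta1 Y * Delta1 Z * Cross Y Z) *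
        (Delta1 X' * Delta1 Y') := by ring
end

section
/- For any set X = {x₁ < x₂ < ... < xₙ} ⊆ [m+n] of positive integers, Δ₁(X)/H(n) is a positive integer, where Δ₁(X) = ∏_{i<j}(x_j − x_i) and H(n) = ∏_{i=0}^{n−1} i!. -/
open Finset

/-- `H(n) = ∏_{i=0}^{n-1} i!`. -/
def Hfun (n : ℕ) : ℕ :=
  ∏ i ∈ Finset.range n, Nat.factorial i

lemma delta1_pos (X : Finset ℕ) : 0 < Delta1 X := by
  unfold Delta1
  refine Finset.prod_pos fun s _ => Finset.prod_pos fun t ht => ?_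
  have := (Finset.mem_filter.mp ht).2
  omega

lemma delta1_cast (n : ℕ) (X : Finset ℕ) (hcard : X.card = n) :
    (Delta1 X : ℤ) =
      (Matrix.vandermonde (fun i : Fin n => ((X.orderEmbOfFin hcard i : ℕ) : ℤ))).det := by
  rw [Matrix.det_vandermonde]
  set v := X.orderEmbOfFin hcard with hv
  have hinj : Function.Injective fun i : Fin n => (v i : ℕ) := v.injective
  have hXimg : X = Finset.image (fun i => (v i : ℕ)) Finset.univ := by
    apply Finset.coe_injective
    rw [Finset.coe_image, Finset.coe_univ, Set.image_univ]
    exact (Finset.range_orderEmbOfFin X hcard).symm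
  unfold Delta1
  conv_lhs => rw [hXimg]
  rw [Finset.prod_image (fun a _ b _ h => hinj h)]
  push_cast
  refine Finset.prod_congr rfl fun i _ => ?_
  have hfilt : (Finset.image (fun j => (v j : ℕ)) Finset.univ).filter (fun t => v i < t)
      = Finset.image (fun j => (v j : ℕ)) (Finset.Ioi i) := by
    ext t
    simp only [Finset.mem_filter, Finset.mem_image, Finset.mem_univ, true_and,
      Finset.mem_Ioi]
    constructor
    · rintro ⟨⟨j, rfl⟩, hlt⟩
      exact ⟨j, v.strictMono.lt_iff_lt.mp hlt, rfl⟩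
    · rintro ⟨j, hij, rfl⟩
      exact ⟨⟨j, rfl⟩, v.strictMono hij⟩
  rw [hfilt, Finset.prod_image (fun a _ b _ h => hinj h)]
  refine Finset.prod_congr rfl fun j hj => ?_
  have : (v i : ℕ) ≤ v j := le_of_lt (v.strictMono (Finset.mem_Ioi.mp hj))
  push_cast [Nat.cast_sub this]
  ring

lemma H_dvd_delta1 (n : ℕ) (X : Finset ℕ) (hcard : X.card = n) :
    Hfun n ∣ Delta1 X := by
  cases n with
  | zero => simp [Hfun]
  | succ k =>
    have hH : Hfun (k + 1) = Nat.superFactorial k := Nat.prod_range_succ_factorial k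
    have hdvd : ((Nat.superFactorial k : ℤ)) ∣
        (Matrix.vandermonde (fun i : Fin (k + 1) =>
          ((X.orderEmbOfFin hcard i : ℕ) : ℤ))).det :=
      Matrix.superFactorial_dvd_vandermonde_det _
    rw [← delta1_cast (k + 1) X hcard] at hdvd
    rw [hH]
    exact_mod_cast hdvd

/-- Cohn–Larsen–Propp / Gelfand–Tsetlin: for an n-element `X ⊆ [m+n]`, the count
`M(T_{m,n}(X)) = Δ₁(X)/H(n)` is a positive integer: `H(n) ∣ Δ₁(X)` and the
quotient is positive. -/
theorem delta1_div_H_posint (m n : ℕ) (X : Finset ℕ)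
    (hX : X ⊆ Finset.Icc 1 (m + n)) (hcard : X.card = n) :
    Hfun n ∣ Delta1 X ∧ 0 < Delta1 X / Hfun n := by
  have hdvd := H_dvd_delta1 n X hcard
  have hpos := delta1_pos X
  have hHpos : 0 < Hfun n := Finset.prod_pos fun i _ => Nat.factorial_pos i
  exact ⟨hdvd, Nat.div_pos (Nat.le_of_dvd hpos hdvd) hHpos⟩
end
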